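/- Let X be a set, m ≥ 1, f : X → ℝ^m a vector of m objective functions, z ∈ ℝ^m a utopian reference point satisfying z_i < f_i(x) for all x ∈ X and all i, x* ∈ X, and let w ∈ ℝ^m be the weight vector with w_i = c/(f_i(x*) − z_i) for the normalizing constant c > 0 making Σ_{i=1}^m w_i = 1 (so that w_i (f_i(x*) − z_i) = c for every i). If x ∈ X satisfies Ω_tch(x, w, z) ≤ Ω_tch(x*, w, z) + ε for some ε ≥ 0, where Ω_tch(x, w, z) = max_{i ∈ {1,…,m}} w_i |f_i(x) − z_i|, then f_i(x) ≤ f_i(x*) + ε / w_i for every i ∈ {1,…,m}. -/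
import Mathlib


/-- With a utopian reference point `z` (`z_i < f_i(x)` for all
`x, i`) and the weight vector `w_i = c / (f_i(x*) − z_i)` for the normalizing
constant `c > 0` making `Σ_i w_i = 1`, if `x` is an `ε`-approximate minimizer
of the Tchebycheff scalarization relative to `x*`, i.e.
`Ω_tch(x, w, z) ≤ Ω_tch(x*, w, z) + ε` with `ε ≥ 0`, then
`f_i(x) ≤ f_i(x*) + ε / w_i` for every `i`. -/
theorem tchebycheff_eps_min_approx_dominates
    {X : Type*} (m : ℕ) (hm : 1 ≤ m)
    (f : X → Fin m → ℝ) (z : Fin m → ℝ)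
    (hz : ∀ (x : X) (i : Fin m), z i < f x i)
    (xstar : X)
    (c : ℝ) (hc : 0 < c)
    (w : Fin m → ℝ)
    (hw : ∀ i, w i = c / (f xstar i - z i))
    (hwsum : (∑ i, w i) = 1)
    (ε : ℝ) (hε : 0 ≤ ε)
    (x : X)
    (hx : (⨆ i, w i * |f x i - z i|) ≤ (⨆ i, w i * |f xstar i - z i|) + ε) :
    ∀ i, f x i ≤ f xstar i + ε / w i := by
  intro i
  haveI : Nonempty (Fin m) := ⟨⟨0, hm⟩⟩
  have hwpos : ∀ j, 0 < w j := fun j => by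
    rw [hw j]; exact div_pos hc (sub_pos.mpr (hz xstar j))
  have hconst : ∀ j, w j * |f xstar j - z j| = c := fun j => by
    rw [abs_of_pos (sub_pos.mpr (hz xstar j)), hw j,
      div_mul_cancel₀ _ (ne_of_gt (sub_pos.mpr (hz xstar j)))]
  have hsup2 : (⨆ j, w j * |f xstar j - z j|) = c := by
    simp [hconst]
  have hle : w i * |f x i - z i| ≤ ⨆ j, w j * |f x j - z j| :=
    le_ciSup (f := fun j => w j * |f x j - z j|)
      (Set.Finite.bddAbove (Set.finite_range _)) i
  have h1 : w i * (f x i - z i) ≤ c + ε := by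
    rw [abs_of_pos (sub_pos.mpr (hz x i))] at hle
    calc w i * (f x i - z i) ≤ ⨆ j, w j * |f x j - z j| := hle
      _ ≤ c + ε := by rw [← hsup2]; exact hx
  have h2 : w i * (f x i - z i) ≤ w i * (f xstar i - z i) + ε := by
    have := hconst i
    rw [abs_of_pos (sub_pos.mpr (hz xstar i))] at this
    linarith
  have h3 : f x i - f xstar i ≤ ε / w i :=
    (le_div_iff₀ (hwpos i)).2 (by nlinarith)
  linarith
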